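/- Let Q = Aff(A,f) be a connected affine quandle. Then the congruences of Q are exactly the relations ∼_N, where N ranges over the subgroups of A with f(N) = N and a ∼_N b iff a − b ∈ N. -/

import Mathlib

universe u v

/-- A quandle structure on a type `Q`: each left multiplication `L a : b ↦ op a b`
is a bijection (with inverse `invOp a`), the operation is left self-distributive,
and every element is idempotent. -/
structure QuandleStr (Q : Type u) where
  op : Q → Q → Q
  invOp : Q → Q → Q
  inv_op : ∀ a b, invOp a (op a b) = b
  op_inv : ∀ a b, op a (invOp a b) = b
  self_distrib : ∀ a b c, op a (op b c) = op (op a b) (op a c)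
  op_self : ∀ a, op a a = a

namespace QuandleStr

variable {Q : Type u} (S : QuandleStr Q)

/-- Left multiplication as a permutation of `Q`. -/
def L (a : Q) : Equiv.Perm Q where
  toFun := S.op a
  invFun := S.invOp a
  left_inv := S.inv_op a
  right_inv := S.op_inv a

/-- The left multiplication group `LMlt(Q)`. -/
def LMlt : Subgroup (Equiv.Perm Q) := Subgroup.closure (Set.range S.L)

/-- The displacement group `Dis(Q)`, generated by `L a * (L b)⁻¹`. -/
def Dis : Subgroup (Equiv.Perm Q) :=
  Subgroup.closure { g : Equiv.Perm Q | ∃ a b : Q, g = S.L a * (S.L b)⁻¹ }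

/-- `Q` is connected if `Dis(Q)` acts transitively. -/
def IsConnected : Prop := ∀ a b : Q, ∃ g ∈ S.Dis, g a = b

/-- `Q` is semiregular if the stabilizer in `Dis(Q)` of every point is trivial. -/
def IsSemiregular : Prop := ∀ g ∈ S.Dis, ∀ x : Q, g x = x → g = 1

/-- `Q` is faithful if `a ↦ L a` is injective. -/
def IsFaithful : Prop := ∀ a b : Q, (∀ c : Q, S.op a c = S.op b c) → a = b

/-- `Q` is latin if every right multiplication is bijective. -/
def IsLatin : Prop := ∀ a : Q, Function.Bijective (fun b => S.op b a)

/-- `Q` is a crossed set if `a*b = b` implies `b*a = a`. -/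
def IsCrossedSet : Prop := ∀ a b : Q, S.op a b = b → S.op b a = a

/-- A subquandle: a nonempty subset closed under the operation and left division. -/
def IsSubquandle (A : Set Q) : Prop :=
  A.Nonempty ∧ (∀ a ∈ A, ∀ b ∈ A, S.op a b ∈ A) ∧ (∀ a ∈ A, ∀ b ∈ A, S.invOp a b ∈ A)

/-- The automorphism group of the quandle, as a subgroup of `Equiv.Perm Q`. -/
def autGroup : Subgroup (Equiv.Perm Q) where
  carrier := { h : Equiv.Perm Q | ∀ a b : Q, h (S.op a b) = S.op (h a) (h b) }
  one_mem' := by intro a b; rfl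
  mul_mem' := by
    intro g h hg hh a b
    show g (h (S.op a b)) = S.op (g (h a)) (g (h b))
    rw [hh, hg]
  inv_mem' := by
    intro g hg a b
    apply g.injective
    rw [hg]
    simp

/-- `Q` is doubly homogeneous if `Aut(Q)` acts 2-transitively. -/
def IsDoublyHomogeneous : Prop :=
  ∀ a b c d : Q, a ≠ b → c ≠ d → ∃ h ∈ S.autGroup, h a = c ∧ h b = d

/-- The restriction of the quandle structure to a subset closed under both operations. -/
def restrict (A : Set Q) (h1 : ∀ a ∈ A, ∀ b ∈ A, S.op a b ∈ A)
    (h2 : ∀ a ∈ A, ∀ b ∈ A, S.invOp a b ∈ A) : QuandleStr A where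
  op a b := ⟨S.op a b, h1 a a.2 b b.2⟩
  invOp a b := ⟨S.invOp a b, h2 a a.2 b b.2⟩
  inv_op a b := Subtype.ext (S.inv_op a b)
  op_inv a b := Subtype.ext (S.op_inv a b)
  self_distrib a b c := Subtype.ext (S.self_distrib a b c)
  op_self a := Subtype.ext (S.op_self a)

/-- The stabilizer of a point in the displacement group, as a set of permutations. -/
def disStab (x : Q) : Set (Equiv.Perm Q) := { g : Equiv.Perm Q | g ∈ S.Dis ∧ g x = x }

/-- The class of `a` under the relation `σ_Q`: elements with the same stabilizer in `Dis(Q)`. -/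
def sigmaClass (a : Q) : Set Q := { b : Q | S.disStab b = S.disStab a }

/-- A quandle is strictly simple if it has at least two elements and no proper subquandle. -/
def IsStrictlySimple : Prop :=
  (∃ a b : Q, a ≠ b) ∧
    ∀ A : Set Q, S.IsSubquandle A → (∀ a ∈ A, ∀ b ∈ A, a = b) ∨ A = Set.univ

/-- A subset which is a strictly simple subquandle (with the restricted operation). -/
def IsStrictlySimpleSub (A : Set Q) : Prop :=
  S.IsSubquandle A ∧ (∃ a ∈ A, ∃ b ∈ A, a ≠ b) ∧
    ∀ B : Set Q, B ⊆ A → S.IsSubquandle B → (∀ x ∈ B, ∀ y ∈ B, x = y) ∨ B = A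

/-- A congruence of a quandle. -/
structure IsCongruence (r : Q → Q → Prop) : Prop where
  refl : ∀ a, r a a
  symm : ∀ {a b}, r a b → r b a
  trans : ∀ {a b c}, r a b → r b c → r a c
  op_compat : ∀ {a b c d}, r a b → r c d → r (S.op a c) (S.op b d)
  invOp_compat : ∀ {a b c d}, r a b → r c d → r (S.invOp a c) (S.invOp b d)

/-- A quandle is simple if it has at least two elements and its only congruences are
the equality relation and the all relation. -/
def IsSimple : Prop :=
  (∃ a b : Q, a ≠ b) ∧
    ∀ r : Q → Q → Prop, S.IsCongruence r → (∀ a b, r a b ↔ a = b) ∨ (∀ a b, r a b)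

end QuandleStr

/-- The product of a family of quandles, with componentwise operation. -/
def piQuandle {I : Type u} {Q : I → Type v} (S : ∀ i, QuandleStr (Q i)) :
    QuandleStr (∀ i, Q i) where
  op a b := fun i => (S i).op (a i) (b i)
  invOp a b := fun i => (S i).invOp (a i) (b i)
  inv_op a b := funext fun i => (S i).inv_op (a i) (b i)
  op_inv a b := funext fun i => (S i).op_inv (a i) (b i)
  self_distrib a b c := funext fun i => (S i).self_distrib (a i) (b i) (c i)
  op_self a := funext fun i => (S i).op_self (a i)

/-- The principal quandle `Q_Hom(G, f)` over a group `G` with automorphism `f`: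
the underlying set is `G` with `a * b = a · f(a⁻¹ b)`. -/
def principalQuandle {G : Type u} [Group G] (f : G ≃* G) : QuandleStr G where
  op a b := a * f (a⁻¹ * b)
  invOp a b := a * f.symm (a⁻¹ * b)
  inv_op a b := by simp
  op_inv a b := by simp
  self_distrib a b c := by
    simp only [map_mul, map_inv, mul_inv_rev, mul_assoc, inv_mul_cancel_left,
      mul_inv_cancel_left, inv_inv]
  op_self a := by simp

/-- The affine quandle `Aff(A, f)` over an abelian group `A` with automorphism `f`:
the underlying set is `A` with `a * b = a - f a + f b`. -/
def affineQuandle {A : Type u} [AddCommGroup A] (f : A ≃+ A) : QuandleStr A where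
  op a b := a - f a + f b
  invOp a b := f.symm (b - a + f a)
  inv_op a b := by
    try dsimp only
    have h : (a - f a + f b) - a + f a = f b := by abel
    rw [h, f.symm_apply_apply]
  op_inv a b := by
    try dsimp only
    rw [f.apply_symm_apply]
    abel
  self_distrib a b c := by
    try dsimp only
    simp only [map_add, map_sub]
    abel
  op_self a := by
    try dsimp only
    rw [sub_add_cancel]

/-- A witness that a quandle is principal: a group `G`, an automorphism `f`, and a
quandle isomorphism with `Q_Hom(G, f)`. -/
structure PrincipalWitness {Q : Type u} (S : QuandleStr Q) : Type (u + 1) where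
  G : Type u
  [grp : Group G]
  f : G ≃* G
  e : Q ≃ G
  hop : ∀ a b : Q, e (S.op a b) = (principalQuandle f).op (e a) (e b)

/-- A quandle is principal if it is isomorphic to some `Q_Hom(G, f)`. -/
def IsPrincipal {Q : Type u} (S : QuandleStr Q) : Prop := Nonempty (PrincipalWitness S)


section Aux

variable {A : Type u} [AddCommGroup A] (f : A ≃+ A)

lemma aff_op (a b : A) : (affineQuandle f).op a b = a - f a + f b := rfl

lemma aff_invOp (a b : A) : (affineQuandle f).invOp a b = f.symm (b - a + f a) := rfl

lemma aff_L (a x : A) : (affineQuandle f).L a x = a - f a + f x := rfl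

lemma aff_Linv (a x : A) : ((affineQuandle f).L a)⁻¹ x = f.symm (x - a + f a) := rfl

end Aux

/-- The congruences of a connected affine quandle `Aff(A, f)` are exactly
the relations `∼_N` (`a ∼_N b ↔ a - b ∈ N`) for `N` a subgroup of `A` with `f(N) = N`. -/
theorem statement9 {A : Type u} [AddCommGroup A] (f : A ≃+ A)
    (hc : (affineQuandle f).IsConnected) :
    ∀ r : A → A → Prop,
      (affineQuandle f).IsCongruence r ↔
        ∃ N : AddSubgroup A, AddSubgroup.map f.toAddMonoidHom N = N ∧
          ∀ a b : A, r a b ↔ a - b ∈ N := by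
  intro r
  constructor
  · intro hr
    set φ : A →+ A := AddMonoidHom.id A - f.toAddMonoidHom with hφ
    have hφapp : ∀ x : A, φ x = x - f x := by intro x; simp [hφ]
    have hgen : ∀ g ∈ (affineQuandle f).Dis, ∃ t ∈ φ.range, ∀ x : A, g x = x + t := by
      intro g hg
      induction hg using Subgroup.closure_induction with
      | mem g hg =>
        obtain ⟨a, b, rfl⟩ := hg
        refine ⟨φ (a - b), ⟨a - b, rfl⟩, fun x => ?_⟩
        rw [Equiv.Perm.mul_apply, aff_Linv, aff_L, f.apply_symm_apply, hφapp, map_sub]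
        abel
      | one => exact ⟨0, zero_mem _, fun x => by simp⟩
      | mul g h _ _ hg hh =>
        obtain ⟨t, ht, hgt⟩ := hg
        obtain ⟨s, hs, hhs⟩ := hh
        refine ⟨s + t, add_mem hs ht, fun x => ?_⟩
        rw [Equiv.Perm.mul_apply, hhs, hgt]
        abel
      | inv g _ hg =>
        obtain ⟨t, ht, hgt⟩ := hg
        refine ⟨-t, neg_mem ht, fun x => ?_⟩
        have h1 : g (x + -t) = x := by rw [hgt]; abel
        calc g⁻¹ x = g⁻¹ (g (x + -t)) := by rw [h1]
          _ = x + -t := by simp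
    have hsurj : ∀ c : A, ∃ d : A, d - f d = c := by
      intro c
      obtain ⟨g, hg, hg0⟩ := hc 0 c
      obtain ⟨t, ⟨d, hd⟩, hgt⟩ := hgen g hg
      refine ⟨d, ?_⟩
      have h0 := hgt 0
      rw [hg0, zero_add] at h0
      rw [h0, ← hd, hφapp]
    have tinv : ∀ (c x y : A), r x y → r (x + c) (y + c) := by
      intro c x y hxy
      obtain ⟨d, hd⟩ := hsurj c
      have h1 := hr.invOp_compat (hr.refl 0) hxy
      have h2 := hr.op_compat (hr.refl d) h1
      have e : ∀ z : A, (affineQuandle f).op d ((affineQuandle f).invOp 0 z) = z + c := by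
        intro z
        rw [aff_op, aff_invOp]
        simp only [map_zero, add_zero, sub_zero, f.apply_symm_apply]
        rw [hd, add_comm]
      rw [e x, e y] at h2
      exact h2
    have hmemf : ∀ x : A, r x 0 → r (f x) 0 := by
      intro x hx
      have h1 := hr.op_compat (hr.refl 0) hx
      have e1 : (affineQuandle f).op 0 x = f x := by rw [aff_op]; simp
      have e2 : (affineQuandle f).op 0 0 = (0 : A) := by rw [aff_op]; simp
      rwa [e1, e2] at h1
    have hmemfs : ∀ x : A, r x 0 → r (f.symm x) 0 := by
      intro x hx
      have h1 := hr.invOp_compat (hr.refl 0) hx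
      have e1 : (affineQuandle f).invOp 0 x = f.symm x := by rw [aff_invOp]; simp
      have e2 : (affineQuandle f).invOp 0 0 = (0 : A) := by rw [aff_invOp]; simp
      rwa [e1, e2] at h1
    refine ⟨{ carrier := {x | r x 0}
            , zero_mem' := hr.refl 0
            , add_mem' := ?_
            , neg_mem' := ?_ }, ?_, ?_⟩
    · intro a b ha hb
      have h1 := tinv b a 0 ha
      rw [zero_add] at h1
      exact hr.trans h1 hb
    · intro a ha
      have h1 := tinv (-a) a 0 ha
      rw [add_neg_cancel, zero_add] at h1
      exact hr.symm h1
    · ext z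
      simp only [AddSubgroup.mem_map, AddSubgroup.mem_mk, Set.mem_setOf_eq,
        AddEquiv.coe_toAddMonoidHom]
      constructor
      · rintro ⟨x, hx, rfl⟩
        exact hmemf x hx
      · intro hz
        exact ⟨f.symm z, hmemfs z hz, f.apply_symm_apply z⟩
    · intro a b
      simp only [AddSubgroup.mem_mk, Set.mem_setOf_eq]
      constructor
      · intro hab
        have h1 := tinv (-b) a b hab
        rw [add_neg_cancel] at h1
        rw [sub_eq_add_neg]
        exact h1
      · intro hab
        have h1 := tinv b (a - b) 0 hab
        rw [sub_add_cancel, zero_add] at h1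
        exact h1
  · rintro ⟨N, hN, hrN⟩
    have hfN : ∀ x ∈ N, f x ∈ N := by
      intro x hx
      have : f.toAddMonoidHom x ∈ AddSubgroup.map f.toAddMonoidHom N :=
        AddSubgroup.mem_map_of_mem _ hx
      rwa [hN] at this
    have hfsN : ∀ x ∈ N, f.symm x ∈ N := by
      intro x hx
      rw [← hN] at hx
      obtain ⟨y, hy, hyx⟩ := hx
      have : f.symm x = y := by
        rw [← hyx]; simp
      rwa [this]
    constructor
    · intro a
      exact (hrN a a).mpr (by simpa using N.zero_mem)
    · intro a b hab
      have := neg_mem ((hrN a b).mp hab)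
      rw [neg_sub] at this
      exact (hrN b a).mpr this
    · intro a b c hab hbc
      have := add_mem ((hrN a b).mp hab) ((hrN b c).mp hbc)
      rw [sub_add_sub_cancel] at this
      exact (hrN a c).mpr this
    · intro a b c d hab hcd
      have hab' := (hrN a b).mp hab
      have hcd' := (hrN c d).mp hcd
      refine (hrN _ _).mpr ?_
      rw [aff_op, aff_op]
      have key : a - f a + f c - (b - f b + f d) = (a - b) - f (a - b) + f (c - d) := by
        rw [map_sub, map_sub]; abel
      rw [key]
      exact add_mem (sub_mem hab' (hfN _ hab')) (hfN _ hcd')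
    · intro a b c d hab hcd
      have hab' := (hrN a b).mp hab
      have hcd' := (hrN c d).mp hcd
      refine (hrN _ _).mpr ?_
      rw [aff_invOp, aff_invOp, ← map_sub]
      have key : c - a + f a - (d - b + f b) = (c - d) - (a - b) + f (a - b) := by
        rw [map_sub]; abel
      rw [key]
      exact hfsN _ (add_mem (sub_mem hcd' hab') (hfN _ hab'))
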